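/- The number of monotone lattice paths from (0,0) to (n,n) (using unit up-steps and right-steps) whose enclosed area α(L) is congruent to 0 mod n equals 2·T_n, where T_n is the number of submultisets of {0,1,...,n-1} of size n summing to 0 mod n. -/

import Mathlib

open Finset Filter Topology

noncomputable section

/-- number of size-`k` submultisets of `{0,…,n-1}` whose sum is ≡ 0 mod `n` -/
def symCount (n k : ℕ) : ℕ :=
  Nat.card {s : Sym (Fin n) k // ((s : Multiset (Fin n)).map Fin.val).sum % n = 0}

/-- `T n`: number of size-`n` submultisets of `{0,…,n-1}` summing to `0` mod `n`
(= number of rooted unlabelled cyclically distinct plane trees with `n` edges). -/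
def planeTreeT (n : ℕ) : ℕ := symCount n n

/-- Walkup's formula expression `(1/n) ∑_{d ∣ n} C(2d-1, d) φ(n/d)` (exact division). -/
def walkupT (n : ℕ) : ℕ :=
  (∑ d ∈ n.divisors, Nat.choose (2 * d - 1) d * Nat.totient (n / d)) / n

/-- number of up-steps strictly before position `i` in a monotone lattice path
encoded by `f : Fin m → Bool` (`true` = up-step, `false` = right-step). -/
def upsBefore {m : ℕ} (f : Fin m → Bool) (i : Fin m) : ℕ :=
  Nat.card {j : Fin m // j < i ∧ f j = true}

/-- area below/right of a monotone lattice path: sum over right-steps of the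
number of up-steps before them. -/
def pathArea {m : ℕ} (f : Fin m → Bool) : ℕ :=
  ∑ i : Fin m, if f i = false then upsBefore f i else 0

/-- number of up-steps of a monotone lattice path. -/
def upCount {m : ℕ} (f : Fin m → Bool) : ℕ := Nat.card {i : Fin m // f i = true}

/-- the `m`-th increment (`±1`) of a walk of length `2n` encoded by
`ε : Fin (2n) → Bool` (`true` = `+1`); `0` out of range. -/
def stepVal (n : ℕ) (ε : Fin (2 * n) → Bool) (m : ℕ) : ℤ :=
  if h : m < 2 * n then (if ε ⟨m, h⟩ then 1 else -1) else 0

/-- position of the walk after `k` steps. -/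
def wpos (n : ℕ) (ε : Fin (2 * n) → Bool) (k : ℕ) : ℤ :=
  ∑ i ∈ Finset.range k, stepVal n ε i

/-- a walk of length `2n` is a bridge if it returns to `0`. -/
def IsBridge (n : ℕ) (ε : Fin (2 * n) → Bool) : Prop := wpos n ε (2 * n) = 0

/-- partial diamond area `σ_{2k} = (1/2) ∑_{i=1}^k B_{2i}` (the division is exact). -/
def psig (n : ℕ) (ε : Fin (2 * n) → Bool) (k : ℕ) : ℤ :=
  (∑ i ∈ Finset.range k, wpos n ε (2 * (i + 1))) / 2

/-- diamond area `σ(B) = (1/2) ∑_{i=1}^n B_{2i}`. -/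
def dsigma (n : ℕ) (ε : Fin (2 * n) → Bool) : ℤ := psig n ε n

/-- a bridge is graphical if `σ(B) = 0` and `σ_{2k} ≥ 0` for all `1 ≤ k < n`. -/
def IsGraphical (n : ℕ) (ε : Fin (2 * n) → Bool) : Prop :=
  IsBridge n ε ∧ dsigma n ε = 0 ∧ ∀ k, 1 ≤ k → k < n → 0 ≤ psig n ε k

/-- `B_n`: the number of graphical bridges of length `2n`. -/
def graphicalCount (n : ℕ) : ℕ := Nat.card {ε : Fin (2 * n) → Bool // IsGraphical n ε}

lemma two_mul_choose_two (n : ℕ) : 2 * n.choose 2 = n * (n-1) := by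
  rcases n with _|m
  · simp
  · rw [Nat.choose_two_right, Nat.mul_div_cancel']
    simpa [mul_comm] using (Nat.even_mul_succ_self m).two_dvd

lemma sum_fin_id (n : ℕ) : ∑ i : Fin n, (i:ℕ) = n.choose 2 := by
  rw [Fin.sum_univ_eq_sum_range (fun i => i), Finset.sum_range_id, Nat.choose_two_right]

lemma gap_le {n m : ℕ} {g : Fin n → Fin m} (hg : StrictMono g) :
    ∀ (d : ℕ) (i j : Fin n), (i:ℕ) + d = (j:ℕ) → (g i : ℕ) + d ≤ (g j : ℕ) := by
  intro d
  induction d with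
  | zero =>
    intro i j h
    have : i = j := Fin.ext (by omega)
    simp [this]
  | succ d ih =>
    intro i j h
    have hj' : (i:ℕ) + d < n := by omega
    have h1 := ih i ⟨(i:ℕ)+d, hj'⟩ rfl
    have h2 : g ⟨(i:ℕ)+d, hj'⟩ < g j := hg (by rw [Fin.lt_def]; simp; omega)
    have h3 := Fin.lt_def.mp h2
    omega

lemma rank_sum {m : ℕ} (S : Finset (Fin m)) :
    ∑ i ∈ S, (S.filter (· < i)).card = S.card.choose 2 := by
  induction S using Finset.induction_on_max with
  | empty => simp
  | insert a s ha ih =>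
    have hna : a ∉ s := fun h => lt_irrefl a (ha a h)
    have h1 : (insert a s).filter (· < a) = s := by
      ext x
      simp only [Finset.mem_filter, Finset.mem_insert]
      constructor
      · rintro ⟨hx | hx, hlt⟩
        · exact absurd hlt (by simp [hx])
        · exact hx
      · exact fun hx => ⟨Or.inr hx, ha x hx⟩
    have h2 : ∀ i ∈ s, (insert a s).filter (· < i) = s.filter (· < i) := by
      intro i hi
      ext x
      simp only [Finset.mem_filter, Finset.mem_insert]
      constructor
      · rintro ⟨hx | hx, hlt⟩
        · exact absurd ((hx ▸ hlt).trans (ha i hi)) (lt_irrefl a)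
        · exact ⟨hx, hlt⟩
      · exact fun ⟨hx, hlt⟩ => ⟨Or.inr hx, hlt⟩
    rw [Finset.sum_insert hna, h1, Finset.sum_congr rfl (fun i hi => by rw [h2 i hi]), ih,
      Finset.card_insert_of_notMem hna, Nat.choose_succ_succ, Nat.choose_one_right]

lemma upsBefore_eq {m : ℕ} (f : Fin m → Bool) (i : Fin m) :
    upsBefore f i = ((Finset.Iio i).filter (fun j => f j = true)).card := by
  rw [upsBefore, Nat.card_eq_fintype_card, Fintype.card_subtype]
  congr 1
  ext j
  simp [Finset.mem_filter]

lemma val_eq_ups_add_rank {m : ℕ} (f : Fin m → Bool) (i : Fin m) :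
    (i : ℕ) = upsBefore f i +
      (((univ.filter (fun j => f j = false)) : Finset (Fin m)).filter (· < i)).card := by
  have hsplit := Finset.card_filter_add_card_filter_not
    (s := Finset.Iio i) (p := fun j => f j = true)
  have h2 : (Finset.Iio i).filter (fun j => ¬ f j = true)
      = ((univ.filter (fun j => f j = false)).filter (· < i)) := by
    ext x
    simp [Finset.mem_filter, and_comm]
  rw [upsBefore_eq, ← Fin.card_Iio i, ← hsplit, h2]

lemma pathArea_eq_sum {m : ℕ} (f : Fin m → Bool) :
    pathArea f = ∑ i ∈ univ.filter (fun i => f i = false), upsBefore f i :=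
  (Finset.sum_filter _ _).symm

lemma sum_val_eq_pathArea {m : ℕ} (f : Fin m → Bool) :
    ∑ i ∈ univ.filter (fun i => f i = false), (i:ℕ)
      = pathArea f + (univ.filter (fun i => f i = false)).card.choose 2 := by
  rw [pathArea_eq_sum, ← rank_sum (univ.filter (fun i => f i = false)),
    ← Finset.sum_add_distrib]
  exact Finset.sum_congr rfl fun i _ => val_eq_ups_add_rank f i



def pathFinsetEquiv (m : ℕ) : (Fin m → Bool) ≃ Finset (Fin m) where
  toFun f := univ.filter (fun i => f i = false)
  invFun S := fun i => decide (i ∉ S)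
  left_inv f := by
    funext i
    simp only [Finset.mem_filter, Finset.mem_univ, true_and]
    cases h : f i <;> simp [h]
  right_inv S := by ext i; simp

lemma upCount_card {m : ℕ} (f : Fin m → Bool) :
    (univ.filter (fun i => f i = false)).card + upCount f = m := by
  rw [upCount, Nat.card_eq_fintype_card, Fintype.card_subtype]
  have h := Finset.card_filter_add_card_filter_not
    (s := (univ : Finset (Fin m))) (p := fun i => f i = false)
  simp only [Bool.not_eq_false] at h
  simpa using h

lemma path_iff' (n : ℕ) (hn : 0 < n) (f : Fin (2*n) → Bool) :
    (upCount f = n ∧ pathArea f % n = 0) ↔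
    ((univ.filter (fun i => f i = false)).card = n ∧
      (∑ i ∈ univ.filter (fun i => f i = false), ((i:ℕ) : ZMod n))
        = ((n.choose 2 : ℕ) : ZMod n)) := by
  have : NeZero n := ⟨hn.ne'⟩
  have hc := upCount_card f
  constructor
  · rintro ⟨hu, ha⟩
    have hS : (univ.filter (fun i => f i = false)).card = n := by omega
    refine ⟨hS, ?_⟩
    have hsum : ∑ i ∈ univ.filter (fun i => f i = false), (i:ℕ)
        = pathArea f + n.choose 2 := by rw [sum_val_eq_pathArea, hS]
    have hdvd : (n : ℕ) ∣ pathArea f := Nat.dvd_of_mod_eq_zero ha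
    rw [← Nat.cast_sum, hsum, Nat.cast_add,
      (ZMod.natCast_eq_zero_iff _ _).mpr hdvd, zero_add]
  · rintro ⟨hS, hz⟩
    refine ⟨by omega, ?_⟩
    have hsum : ∑ i ∈ univ.filter (fun i => f i = false), (i:ℕ)
        = pathArea f + n.choose 2 := by rw [sum_val_eq_pathArea, hS]
    rw [← Nat.cast_sum, hsum, Nat.cast_add, add_eq_right] at hz
    exact Nat.mod_eq_zero_of_dvd ((ZMod.natCast_eq_zero_iff _ _).mp hz)


lemma sort_coe_of_sorted {α : Type*} [LinearOrder α] (l : List α) (h : l.Pairwise (·≤·)) :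
    Multiset.sort (↑l) (·≤·) = l :=
  List.Perm.eq_of_pairwise' (Multiset.pairwise_sort _ _) h
    (Multiset.coe_eq_coe.mp (Multiset.sort_eq _ _))

def symSortEquiv (n k : ℕ) : Sym (Fin n) k ≃ {u : Fin k → Fin n // Monotone u} where
  toFun s := ⟨fun i => (Multiset.sort s.1 (·≤·)).get
      ⟨i, by rw [Multiset.length_sort, s.2]; exact i.2⟩, by
    intro i j hij
    exact (Multiset.pairwise_sort _ _).rel_get_of_le (by exact hij)⟩
  invFun u := ⟨(List.ofFn u.1 : List (Fin n)), by simp⟩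
  left_inv s := by
    apply Subtype.ext
    have : List.ofFn (fun i : Fin k => (Multiset.sort s.1 (·≤·)).get
        ⟨i, by rw [Multiset.length_sort, s.2]; exact i.2⟩) = Multiset.sort s.1 (·≤·) := by
      apply List.ext_getElem
      · simp [Multiset.length_sort, s.2]
      · intro i h1 h2
        simp [List.getElem_ofFn]
    show ((List.ofFn _ : List (Fin n)) : Multiset (Fin n)) = s.1
    rw [this, Multiset.sort_eq]
  right_inv u := by
    apply Subtype.ext
    funext i
    show (Multiset.sort (↑(List.ofFn u.1) : Multiset (Fin n)) (·≤·)).get _ = u.1 i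
    have hs : Multiset.sort (↑(List.ofFn u.1) : Multiset (Fin n)) (·≤·) = List.ofFn u.1 :=
      sort_coe_of_sorted _ (List.pairwise_ofFn.mpr (fun _ _ h => u.2 h.le))
    have : ∀ (l : List (Fin n)) (hl : l = List.ofFn u.1) (h : (i : ℕ) < l.length),
        l.get ⟨i, h⟩ = u.1 i := by
      rintro l rfl h
      simp
    exact this _ hs _

lemma symSort_spec (n k : ℕ) (s : Sym (Fin n) k) :
    (s : Multiset (Fin n)) = ↑(List.ofFn ((symSortEquiv n k) s).1) := by
  conv_lhs => rw [← (symSortEquiv n k).left_inv s]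
  rfl

lemma symSort_sum (n k : ℕ) (s : Sym (Fin n) k) :
    ((s : Multiset (Fin n)).map Fin.val).sum = ∑ i, (((symSortEquiv n k) s).1 i : ℕ) := by
  rw [symSort_spec n k s]
  simp [List.map_ofFn, List.sum_ofFn, Function.comp]

def monoStrictEquiv (n : ℕ) (hn : 0 < n) :
    {u : Fin n → Fin n // Monotone u} ≃ {g : Fin n → Fin (2*n-1) // StrictMono g} where
  toFun u := ⟨fun i => ⟨u.1 i + i, by have h1 := (u.1 i).2; have h2 := i.2; omega⟩, by
    intro i j hij
    rw [Fin.lt_def]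
    have h1 := u.2 hij.le
    rw [Fin.le_def] at h1
    have h2 := Fin.lt_def.mp hij
    simp only []
    omega⟩
  invFun g := ⟨fun i => ⟨(g.1 i : ℕ) - i, by
      have hup := gap_le g.2 ((n-1) - i) i ⟨n-1, by omega⟩ (by simp; omega)
      have h2 := (g.1 ⟨n-1, by omega⟩).2
      have h3 := i.2
      omega⟩, by
    intro i j hij
    rw [Fin.le_def] at hij ⊢
    have := gap_le g.2 ((j:ℕ) - i) i j (by omega)
    simp only []
    omega⟩
  left_inv u := by
    apply Subtype.ext
    funext i
    apply Fin.ext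
    simp
  right_inv g := by
    apply Subtype.ext
    funext i
    apply Fin.ext
    have hlow := gap_le g.2 (i : ℕ) ⟨0, hn⟩ i (by simp)
    simp
    omega

def strictFinsetEquiv (m k : ℕ) : {g : Fin k → Fin m // StrictMono g} ≃
    {S : Finset (Fin m) // S.card = k} where
  toFun g := ⟨image g.1 univ, by
    rw [Finset.card_image_of_injective _ g.2.injective, card_univ, Fintype.card_fin]⟩
  invFun S := ⟨S.1.orderEmbOfFin S.2, (S.1.orderEmbOfFin S.2).strictMono⟩
  left_inv g := by
    apply Subtype.ext
    exact (Finset.orderEmbOfFin_unique _ (fun i => mem_image_of_mem _ (mem_univ i)) g.2).symm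
  right_inv S := by
    apply Subtype.ext
    ext a
    simp only [Finset.mem_image, Finset.mem_univ, true_and]
    constructor
    · rintro ⟨i, rfl⟩
      exact Finset.orderEmbOfFin_mem _ _ _
    · intro ha
      have := Finset.range_orderEmbOfFin S.1 S.2
      have : a ∈ Set.range (S.1.orderEmbOfFin S.2) := by rw [this]; exact ha
      obtain ⟨i, hi⟩ := this
      exact ⟨i, hi⟩

lemma strictFinset_sum (m k : ℕ) (g : {g : Fin k → Fin m // StrictMono g}) :
    ∑ x ∈ ((strictFinsetEquiv m k) g).1, (x : ℕ) = ∑ i, (g.1 i : ℕ) :=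
  Finset.sum_image (fun i _ j _ h => g.2.injective h)

variable {n : ℕ}

/-- sum of casts of elements -/
def Z (n : ℕ) {m : ℕ} (S : Finset (Fin m)) : ZMod n := ∑ i ∈ S, ((i : ℕ) : ZMod n)

lemma Z_map_castLE {m m' : ℕ} (h : m ≤ m') (T : Finset (Fin m)) :
    Z n ((T.map (Fin.castLEEmb h))) = Z n T := by
  rw [Z, Finset.sum_map]
  rfl


lemma KK (hn : 0 < n) : ((n.choose 2 : ℕ) : ZMod n) + ((n.choose 2 : ℕ) : ZMod n) = 0 := by
  have : ((2 * n.choose 2 : ℕ) : ZMod n) = ((n * (n-1) : ℕ) : ZMod n) := by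
    rw [two_mul_choose_two]
  push_cast at this
  rw [ZMod.natCast_self] at this
  simp [two_mul] at this
  linear_combination this

lemma cast_sub_one (hn : 0 < n) : ((n - 1 : ℕ) : ZMod n) = -1 := by
  rw [Nat.cast_sub (by omega : 1 ≤ n), ZMod.natCast_self]
  push_cast
  ring

lemma cast_two_n_sub_one (hn : 0 < n) : ((2 * n - 1 : ℕ) : ZMod n) = -1 := by
  rw [Nat.cast_sub (by omega : 1 ≤ 2 * n), Nat.cast_mul, ZMod.natCast_self]
  push_cast
  ring

lemma Z_univ (hn : 0 < n) : Z n (univ : Finset (Fin (2*n-1))) = 1 := by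
  have hnat : ∑ i : Fin (2*n-1), (i : ℕ) = (2*n-1) * (n-1) := by
    rw [Fin.sum_univ_eq_sum_range (fun i => i), Finset.sum_range_id]
    obtain ⟨m, rfl⟩ : ∃ m, n = m + 1 := ⟨n-1, by omega⟩
    have h1 : 2 * (m+1) - 1 = 2*m+1 := by omega
    have h2 : 2*m+1-1 = 2*m := by omega
    have h3 : m + 1 - 1 = m := by omega
    rw [h1, h2, h3]
    have : (2*m+1) * (2*m) = ((2*m+1) * m) * 2 := by ring
    rw [this, Nat.mul_div_cancel _ (by norm_num)]
  rw [Z, ← Nat.cast_sum, hnat, Nat.cast_mul, cast_two_n_sub_one hn, cast_sub_one hn]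
  ring

section bijections

def KZ (n : ℕ) : ZMod n := ((n.choose 2 : ℕ) : ZMod n)

lemma hle (hn : 0 < n) : 2*n - 1 ≤ 2*n := by omega

def lastF (hn : 0 < n) : Fin (2*n) := ⟨2*n-1, by omega⟩

lemma map_preimage_eq (hn : 0 < n) {S : Finset (Fin (2*n))} (hl : lastF hn ∉ S) :
    (S.preimage (Fin.castLE (hle hn)) ((Fin.castLE_injective _).injOn)).map
      (Fin.castLEEmb (hle hn)) = S := by
  ext b
  simp only [Finset.mem_map, Finset.mem_preimage]
  constructor
  · rintro ⟨a, ha, rfl⟩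
    exact ha
  · intro hb
    have hbv : (b : ℕ) < 2*n - 1 := by
      have h1 : (b : ℕ) < 2*n := b.2
      have h2 : b ≠ lastF hn := fun h => hl (h ▸ hb)
      have : (b : ℕ) ≠ 2*n - 1 := fun h => h2 (Fin.ext h)
      omega
    refine ⟨⟨(b : ℕ), hbv⟩, ?_, Fin.ext rfl⟩
    have hcb : (Fin.castLE (hle hn)) ⟨(b : ℕ), hbv⟩ = b := Fin.ext rfl
    rw [hcb]
    exact hb

lemma preimage_map_eq (hn : 0 < n) (T : Finset (Fin (2*n-1))) :
    ((T.map (Fin.castLEEmb (hle hn))).preimage (Fin.castLE (hle hn))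
      ((Fin.castLE_injective _).injOn)) = T := by
  ext a
  simp only [Finset.mem_preimage]
  exact Finset.mem_map' _

lemma lastF_not_mem_map (hn : 0 < n) (T : Finset (Fin (2*n-1))) :
    lastF hn ∉ T.map (Fin.castLEEmb (hle hn)) := by
  intro h
  obtain ⟨a, _, ha⟩ := Finset.mem_map.mp h
  have := a.2
  have : (a : ℕ) = 2*n-1 := congrArg Fin.val ha
  omega

/-- bijection for the "last ∉ S" branch -/
lemma card_no_last (hn : 0 < n) :
    (univ.filter (fun S : Finset (Fin (2*n)) =>
        (S.card = n ∧ Z n S = KZ n) ∧ lastF hn ∉ S)).card =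
    (univ.filter (fun T : Finset (Fin (2*n-1)) => T.card = n ∧ Z n T = KZ n)).card := by
  apply Finset.card_nbij'
    (i := fun S => S.preimage (Fin.castLE (hle hn)) ((Fin.castLE_injective _).injOn))
    (j := fun T => T.map (Fin.castLEEmb (hle hn)))
  · intro S hS
    simp only [Finset.mem_coe, Finset.mem_filter, Finset.mem_univ, true_and] at hS ⊢
    obtain ⟨⟨hcard, hz⟩, hl⟩ := hS
    have hmp := map_preimage_eq hn (S := S) hl
    constructor
    · rw [← Finset.card_map (Fin.castLEEmb (hle hn)), hmp, hcard]
    · rw [← Z_map_castLE (hle hn) (S.preimage (Fin.castLE (hle hn)) ((Fin.castLE_injective _).injOn)), hmp, hz]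
  · intro T hT
    simp only [Finset.mem_coe, Finset.mem_filter, Finset.mem_univ, true_and] at hT ⊢
    obtain ⟨hcard, hz⟩ := hT
    refine ⟨⟨?_, ?_⟩, lastF_not_mem_map hn T⟩
    · rw [Finset.card_map, hcard]
    · rw [Z_map_castLE, hz]
  · intro S hS
    simp only [Finset.mem_coe, Finset.mem_filter, Finset.mem_univ, true_and] at hS
    exact map_preimage_eq hn hS.2
  · intro T _
    exact preimage_map_eq hn T

/-- bijection for the "last ∈ S" branch -/
lemma card_last (hn : 0 < n) :
    (univ.filter (fun S : Finset (Fin (2*n)) =>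
        (S.card = n ∧ Z n S = KZ n) ∧ lastF hn ∈ S)).card =
    (univ.filter (fun T : Finset (Fin (2*n-1)) =>
        T.card = n - 1 ∧ Z n T = KZ n + 1)).card := by
  have hlastz : ((lastF hn : ℕ) : ZMod n) = -1 := cast_two_n_sub_one hn
  apply Finset.card_nbij'
    (i := fun S => (S.erase (lastF hn)).preimage (Fin.castLE (hle hn))
      ((Fin.castLE_injective _).injOn))
    (j := fun T => insert (lastF hn) (T.map (Fin.castLEEmb (hle hn))))
  · intro S hS
    simp only [Finset.mem_coe, Finset.mem_filter, Finset.mem_univ, true_and] at hS ⊢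
    obtain ⟨⟨hcard, hz⟩, hl⟩ := hS
    have hmp := map_preimage_eq hn (S := S.erase (lastF hn)) (Finset.notMem_erase _ _)
    have hcard_erase : (S.erase (lastF hn)).card = n - 1 := by
      rw [Finset.card_erase_of_mem hl, hcard]
    have hz_erase : Z n (S.erase (lastF hn)) = KZ n + 1 := by
      have hadd := Finset.add_sum_erase S (fun i : Fin (2*n) => ((i:ℕ) : ZMod n)) hl
      have h2 : ((lastF hn : ℕ) : ZMod n) + Z n (S.erase (lastF hn)) = KZ n := by
        rw [Z, hadd]
        exact hz
      rw [hlastz] at h2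
      linear_combination h2
    constructor
    · rw [← Finset.card_map (Fin.castLEEmb (hle hn)), hmp, hcard_erase]
    · rw [← Z_map_castLE (hle hn) ((S.erase (lastF hn)).preimage (Fin.castLE (hle hn)) ((Fin.castLE_injective _).injOn)), hmp, hz_erase]
  · intro T hT
    simp only [Finset.mem_coe, Finset.mem_filter, Finset.mem_univ, true_and] at hT ⊢
    obtain ⟨hcard, hz⟩ := hT
    have hnm := lastF_not_mem_map hn T
    refine ⟨⟨?_, ?_⟩, Finset.mem_insert_self _ _⟩
    · rw [Finset.card_insert_of_notMem hnm, Finset.card_map, hcard]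
      omega
    · rw [Z, Finset.sum_insert hnm]
      have h1 : (∑ i ∈ T.map (Fin.castLEEmb (hle hn)), ((i:ℕ) : ZMod n))
          = Z n T := Z_map_castLE (hle hn) T
      rw [h1, hz, hlastz]
      ring
  · intro S hS
    simp only [Finset.mem_coe, Finset.mem_filter, Finset.mem_univ, true_and] at hS
    dsimp only
    rw [map_preimage_eq hn (Finset.notMem_erase _ _), Finset.insert_erase hS.2]
  · intro T hT
    dsimp only
    rw [Finset.erase_insert (lastF_not_mem_map hn T), preimage_map_eq hn T]

/-- complement bijection -/
lemma card_compl (hn : 0 < n) :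
    (univ.filter (fun T : Finset (Fin (2*n-1)) =>
        T.card = n - 1 ∧ Z n T = KZ n + 1)).card =
    (univ.filter (fun T : Finset (Fin (2*n-1)) => T.card = n ∧ Z n T = KZ n)).card := by
  have hKK : KZ n + KZ n = 0 := KK hn
  have hcardfin : Fintype.card (Fin (2*n-1)) = 2*n-1 := Fintype.card_fin _
  apply Finset.card_nbij' (i := fun T => Tᶜ) (j := fun T => Tᶜ)
  · intro T hT
    simp only [Finset.mem_coe, Finset.mem_filter, Finset.mem_univ, true_and] at hT ⊢
    obtain ⟨hcard, hz⟩ := hT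
    constructor
    · rw [Finset.card_compl, hcardfin, hcard]
      omega
    · have hsum : Z n Tᶜ + Z n T = Z n (univ : Finset (Fin (2*n-1))) := by
        rw [Z, Z, Z, add_comm]
        exact Finset.sum_add_sum_compl T _
      rw [Z_univ hn, hz] at hsum
      linear_combination hsum - hKK
  · intro T hT
    simp only [Finset.mem_coe, Finset.mem_filter, Finset.mem_univ, true_and] at hT ⊢
    obtain ⟨hcard, hz⟩ := hT
    constructor
    · rw [Finset.card_compl, hcardfin, hcard]
      omega
    · have hsum : Z n Tᶜ + Z n T = Z n (univ : Finset (Fin (2*n-1))) := by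
        rw [Z, Z, Z, add_comm]
        exact Finset.sum_add_sum_compl T _
      rw [Z_univ hn, hz] at hsum
      linear_combination hsum - hKK
  · intro T _; exact compl_compl T
  · intro T _; exact compl_compl T

end bijections

def symFinsetEquiv (n : ℕ) (hn : 0 < n) :
    Sym (Fin n) n ≃ {S : Finset (Fin (2*n-1)) // S.card = n} :=
  (symSortEquiv n n).trans ((monoStrictEquiv n hn).trans (strictFinsetEquiv (2*n-1) n))

lemma symFinset_sum {n : ℕ} (hn : 0 < n) (s : Sym (Fin n) n) :
    ∑ x ∈ ((symFinsetEquiv n hn) s).1, (x : ℕ)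
      = ((s : Multiset (Fin n)).map Fin.val).sum + n.choose 2 := by
  show ∑ x ∈ ((strictFinsetEquiv (2*n-1) n)
    ((monoStrictEquiv n hn) ((symSortEquiv n n) s))).1, (x:ℕ) = _
  rw [strictFinset_sum]
  have hterm : ∀ i : Fin n, (((monoStrictEquiv n hn) ((symSortEquiv n n) s)).1 i : ℕ)
      = (((symSortEquiv n n) s).1 i : ℕ) + (i : ℕ) := fun i => rfl
  rw [Finset.sum_congr rfl (fun i _ => hterm i), Finset.sum_add_distrib, ← symSort_sum,
    sum_fin_id]

lemma sym_iff2 {n : ℕ} (hn : 0 < n) (s : Sym (Fin n) n) :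
    ((s : Multiset (Fin n)).map Fin.val).sum % n = 0 ↔
      Z n ((symFinsetEquiv n hn) s).1 = KZ n := by
  have : NeZero n := ⟨hn.ne'⟩
  have hsum := symFinset_sum hn s
  have hcast : Z n ((symFinsetEquiv n hn) s).1
      = ((((s : Multiset (Fin n)).map Fin.val).sum : ℕ) : ZMod n) + KZ n := by
    rw [Z, ← Nat.cast_sum, hsum, Nat.cast_add]
    rfl
  rw [hcast]
  constructor
  · intro h
    rw [(ZMod.natCast_eq_zero_iff _ _).mpr (Nat.dvd_of_mod_eq_zero h), zero_add]
  · intro h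
    rw [add_eq_right] at h
    exact Nat.mod_eq_zero_of_dvd ((ZMod.natCast_eq_zero_iff _ _).mp h)

lemma pathFinsetEquiv_apply {m : ℕ} (f : Fin m → Bool) :
    (pathFinsetEquiv m) f = Finset.univ.filter (fun i => f i = false) := rfl

theorem lattice_paths_eq_two_trees (n : ℕ) (hn : 0 < n) :
    Nat.card {f : Fin (2 * n) → Bool // upCount f = n ∧ pathArea f % n = 0} =
      2 * planeTreeT n := by
  classical
  have h1 : Nat.card {f : Fin (2*n) → Bool // upCount f = n ∧ pathArea f % n = 0}
      = Nat.card {S : Finset (Fin (2*n)) // S.card = n ∧ Z n S = KZ n} := by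
    apply Nat.card_congr
    apply Equiv.subtypeEquiv (pathFinsetEquiv (2*n))
    intro f
    rw [pathFinsetEquiv_apply]
    exact path_iff' n hn f
  have h2 : Nat.card {S : Finset (Fin (2*n)) // S.card = n ∧ Z n S = KZ n}
      = (univ.filter (fun S : Finset (Fin (2*n)) => S.card = n ∧ Z n S = KZ n)).card := by
    rw [Nat.card_eq_fintype_card, Fintype.card_subtype]
  have hsplit : (univ.filter (fun S : Finset (Fin (2*n)) => S.card = n ∧ Z n S = KZ n)).card
      = (univ.filter (fun S : Finset (Fin (2*n)) =>
          (S.card = n ∧ Z n S = KZ n) ∧ lastF hn ∈ S)).card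
      + (univ.filter (fun S : Finset (Fin (2*n)) =>
          (S.card = n ∧ Z n S = KZ n) ∧ lastF hn ∉ S)).card := by
    have h := Finset.card_filter_add_card_filter_not
      (s := univ.filter (fun S : Finset (Fin (2*n)) => S.card = n ∧ Z n S = KZ n))
      (p := fun S => lastF hn ∈ S)
    rw [Finset.filter_filter, Finset.filter_filter] at h
    exact h.symm
  have h4 : planeTreeT n
      = Nat.card {S : Finset (Fin (2*n-1)) // S.card = n ∧ Z n S = KZ n} := by
    show symCount n n = _
    rw [symCount]
    apply Nat.card_congr
    exact (Equiv.subtypeEquiv (symFinsetEquiv n hn) (fun s => sym_iff2 hn s)).trans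
      (Equiv.subtypeSubtypeEquivSubtypeInter _ _)
  have h5 : Nat.card {S : Finset (Fin (2*n-1)) // S.card = n ∧ Z n S = KZ n}
      = (univ.filter (fun S : Finset (Fin (2*n-1)) => S.card = n ∧ Z n S = KZ n)).card := by
    rw [Nat.card_eq_fintype_card, Fintype.card_subtype]
  rw [h1, h2, hsplit, card_no_last hn, card_last hn, card_compl hn, h4, h5]
  ring
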